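/- Abstract posterior moment stability (abstract form of the paper's Theorem 1): let (Ω, 𝓕, μ₀) be a probability space, let Φ₁, Φ₂ : Ω → [0,∞) be measurable, let Z_i = ∫ e^{−Φ_i} dμ₀ and suppose Z₁, Z₂ ≥ z for some 0 < z ≤ 1, and define posterior densities p_i = e^{−Φ_i}/Z_i with respect to μ₀. Let f : Ω → ℝ be measurable with ∫ f² p₁ dμ₀ ≤ B² and ∫ f² p₂ dμ₀ ≤ B² for some B ≥ 0. Then | ∫ f p₁ dμ₀ − ∫ f p₂ dμ₀ | ≤ 2 B z^{−3/2} ( ∫ (Φ₁ − Φ₂)² dμ₀ )^{1/2}. In particular, if ( ∫ (Φ₁ − Φ₂)² dμ₀ )^{1/2} ≤ C M^{−s} for some C ≥ 0, integer M ≥ 1, and s > 0, then the posterior expectations of f differ by at most 2 B z^{−3/2} C M^{−s}. -/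

import Mathlib

open MeasureTheory

private lemma exp_lip_aux {a b : ℝ} (ha : 0 ≤ a) (hab : a ≤ b) :
    Real.exp (-a) - Real.exp (-b) ≤ b - a := by
  have h1 : Real.exp (-a) - Real.exp (-b) = Real.exp (-a) * (1 - Real.exp (a - b)) := by
    rw [mul_sub, mul_one, ← Real.exp_add]; ring_nf
  have h2 : Real.exp (-a) ≤ 1 := by
    have := Real.exp_le_exp.2 (neg_nonpos.2 ha); simpa using this
  have h3 := Real.add_one_le_exp (a - b)
  nlinarith [Real.exp_pos (-a), Real.exp_pos (a - b)]

private lemma exp_lip {a b : ℝ} (ha : 0 ≤ a) (hb : 0 ≤ b) :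
    |Real.exp (-a) - Real.exp (-b)| ≤ |a - b| := by
  rcases le_total a b with h | h
  · have h1 := exp_lip_aux ha h
    have h2 : Real.exp (-b) ≤ Real.exp (-a) := Real.exp_le_exp.2 (by linarith)
    rw [abs_of_nonneg (by linarith), abs_of_nonpos (by linarith)]
    linarith
  · have h1 := exp_lip_aux hb h
    have h2 : Real.exp (-a) ≤ Real.exp (-b) := Real.exp_le_exp.2 (by linarith)
    rw [abs_of_nonpos (by linarith), abs_of_nonneg (by linarith)]
    linarith

private lemma int_mul' {Ω : Type*} [MeasurableSpace Ω] {μ : Measure Ω} {u v : Ω → ℝ}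
    (hu0 : ∀ x, 0 ≤ u x) (hv0 : ∀ x, 0 ≤ v x)
    (hum : AEStronglyMeasurable u μ) (hvm : AEStronglyMeasurable v μ)
    (hu2 : Integrable (fun x => u x ^ 2) μ) (hv2 : Integrable (fun x => v x ^ 2) μ) :
    Integrable (fun x => u x * v x) μ := by
  refine Integrable.mono' ((hu2.add hv2).div_const 2) (hum.mul hvm) (ae_of_all _ fun x => ?_)
  rw [Real.norm_eq_abs, abs_of_nonneg (mul_nonneg (hu0 x) (hv0 x))]
  simp only [Pi.add_apply]
  nlinarith [sq_nonneg (u x - v x)]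

private lemma abs_int_le {Ω : Type*} [MeasurableSpace Ω] (μ : Measure Ω) (w : Ω → ℝ) :
    |∫ x, w x ∂μ| ≤ ∫ x, |w x| ∂μ := by
  simpa [Real.norm_eq_abs] using norm_integral_le_integral_norm (μ := μ) w

private lemma cs_int {Ω : Type*} [MeasurableSpace Ω] {μ : Measure Ω} {u v : Ω → ℝ}
    (hu0 : ∀ x, 0 ≤ u x) (hv0 : ∀ x, 0 ≤ v x)
    (hum : AEStronglyMeasurable u μ) (hvm : AEStronglyMeasurable v μ)
    (hu2 : Integrable (fun x => u x ^ 2) μ) (hv2 : Integrable (fun x => v x ^ 2) μ) :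
    ∫ x, u x * v x ∂μ ≤ Real.sqrt (∫ x, u x ^ 2 ∂μ) * Real.sqrt (∫ x, v x ^ 2 ∂μ) := by
  have hu : MemLp u (ENNReal.ofReal 2) μ := by
    rw [show ENNReal.ofReal 2 = 2 by norm_num]
    exact (memLp_two_iff_integrable_sq hum).2 hu2
  have hv : MemLp v (ENNReal.ofReal 2) μ := by
    rw [show ENNReal.ofReal 2 = 2 by norm_num]
    exact (memLp_two_iff_integrable_sq hvm).2 hv2
  have hpq : Real.HolderConjugate 2 2 := by
    rw [Real.holderConjugate_iff] <;> norm_num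
  have h := integral_mul_le_Lp_mul_Lq_of_nonneg hpq (ae_of_all _ hu0) (ae_of_all _ hv0) hu hv
  have e1 : ∫ a, u a ^ (2:ℝ) ∂μ = ∫ a, u a ^ 2 ∂μ := by
    refine integral_congr_ae (ae_of_all _ fun x => ?_)
    norm_num [Real.rpow_natCast]
  have e2 : ∫ a, v a ^ (2:ℝ) ∂μ = ∫ a, v a ^ 2 ∂μ := by
    refine integral_congr_ae (ae_of_all _ fun x => ?_)
    norm_num [Real.rpow_natCast]
  rw [e1, e2] at h
  rw [Real.sqrt_eq_rpow, Real.sqrt_eq_rpow]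
  convert h using 3 <;> norm_num

set_option maxHeartbeats 1000000 in
/-- Abstract posterior moment stability (abstract form of the paper's Theorem 1): for
measurable `Φ₁, Φ₂ : Ω → [0,∞)` with normalizing constants `Z_i = ∫ e^{−Φ_i} dμ₀ ≥ z > 0`,
posterior densities `p_i = e^{−Φ_i}/Z_i`, and a measurable `f` with
`∫ f² p_i dμ₀ ≤ B²` for `i = 1,2`,
`|∫ f p₁ dμ₀ − ∫ f p₂ dμ₀| ≤ 2 B z^{−3/2} (∫ (Φ₁ − Φ₂)² dμ₀)^{1/2}`; in particular, if
`(∫ (Φ₁ − Φ₂)² dμ₀)^{1/2} ≤ C M^{−s}` then the posterior expectations of `f` differ by at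
most `2 B z^{−3/2} C M^{−s}`. -/
theorem abstract_posterior_moment_stability {Ω : Type*} [MeasurableSpace Ω]
    (μ₀ : Measure Ω) [IsProbabilityMeasure μ₀]
    (Φ₁ Φ₂ : Ω → ℝ) (hΦ₁m : Measurable Φ₁) (hΦ₂m : Measurable Φ₂)
    (hΦ₁ : ∀ x, 0 ≤ Φ₁ x) (hΦ₂ : ∀ x, 0 ≤ Φ₂ x)
    (hsq : Integrable (fun x => (Φ₁ x - Φ₂ x) ^ 2) μ₀)
    (z : ℝ) (hz0 : 0 < z) (hz1 : z ≤ 1)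
    (hZ₁ : z ≤ ∫ x, Real.exp (-Φ₁ x) ∂μ₀)
    (hZ₂ : z ≤ ∫ x, Real.exp (-Φ₂ x) ∂μ₀)
    (f : Ω → ℝ) (hfm : Measurable f) (B : ℝ) (hB : 0 ≤ B)
    (hf₁ :
      Integrable
        (fun x => f x ^ 2 * (Real.exp (-Φ₁ x) / ∫ y, Real.exp (-Φ₁ y) ∂μ₀)) μ₀)
    (hf₂ :
      Integrable
        (fun x => f x ^ 2 * (Real.exp (-Φ₂ x) / ∫ y, Real.exp (-Φ₂ y) ∂μ₀)) μ₀)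
    (hmom₁ :
      (∫ x, f x ^ 2 * (Real.exp (-Φ₁ x) / ∫ y, Real.exp (-Φ₁ y) ∂μ₀) ∂μ₀) ≤ B ^ 2)
    (hmom₂ :
      (∫ x, f x ^ 2 * (Real.exp (-Φ₂ x) / ∫ y, Real.exp (-Φ₂ y) ∂μ₀) ∂μ₀) ≤ B ^ 2) :
    |(∫ x, f x * (Real.exp (-Φ₁ x) / ∫ y, Real.exp (-Φ₁ y) ∂μ₀) ∂μ₀) -
        ∫ x, f x * (Real.exp (-Φ₂ x) / ∫ y, Real.exp (-Φ₂ y) ∂μ₀) ∂μ₀| ≤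
      2 * B * z ^ (-(3 : ℝ) / 2) *
        Real.sqrt (∫ x, (Φ₁ x - Φ₂ x) ^ 2 ∂μ₀) ∧
    ∀ C : ℝ, 0 ≤ C → ∀ M : ℕ, 1 ≤ M → ∀ s : ℝ, 0 < s →
      Real.sqrt (∫ x, (Φ₁ x - Φ₂ x) ^ 2 ∂μ₀) ≤ C * (M : ℝ) ^ (-s) →
      |(∫ x, f x * (Real.exp (-Φ₁ x) / ∫ y, Real.exp (-Φ₁ y) ∂μ₀) ∂μ₀) -
          ∫ x, f x * (Real.exp (-Φ₂ x) / ∫ y, Real.exp (-Φ₂ y) ∂μ₀) ∂μ₀| ≤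
        2 * B * z ^ (-(3 : ℝ) / 2) * (C * (M : ℝ) ^ (-s)) := by
  -- notation
  set g₁ : Ω → ℝ := fun x => Real.exp (-Φ₁ x) with hg₁def
  set g₂ : Ω → ℝ := fun x => Real.exp (-Φ₂ x) with hg₂def
  set Z₁ : ℝ := ∫ y, Real.exp (-Φ₁ y) ∂μ₀ with hZ₁def
  set Z₂ : ℝ := ∫ y, Real.exp (-Φ₂ y) ∂μ₀ with hZ₂def
  set D : ℝ := Real.sqrt (∫ x, (Φ₁ x - Φ₂ x) ^ 2 ∂μ₀) with hDdef
  have hD0 : 0 ≤ D := Real.sqrt_nonneg _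
  have hZ₁pos : 0 < Z₁ := hz0.trans_le hZ₁
  have hZ₂pos : 0 < Z₂ := hz0.trans_le hZ₂
  -- basic integrabilities
  have hg₁le1 : ∀ x, g₁ x ≤ 1 := fun x => by
    have h := Real.exp_le_exp.2 (neg_nonpos.2 (hΦ₁ x))
    rw [Real.exp_zero] at h; exact h
  have hg₂le1 : ∀ x, g₂ x ≤ 1 := fun x => by
    have h := Real.exp_le_exp.2 (neg_nonpos.2 (hΦ₂ x))
    rw [Real.exp_zero] at h; exact h
  have hg₁0 : ∀ x, 0 ≤ g₁ x := fun x => (Real.exp_pos _).le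
  have hg₂0 : ∀ x, 0 ≤ g₂ x := fun x => (Real.exp_pos _).le
  have hg₁sm : AEStronglyMeasurable g₁ μ₀ := (hΦ₁m.neg.exp).aestronglyMeasurable
  have hg₂sm : AEStronglyMeasurable g₂ μ₀ := (hΦ₂m.neg.exp).aestronglyMeasurable
  have hg₁int : Integrable g₁ μ₀ := by
    refine Integrable.mono' (integrable_const 1) hg₁sm (ae_of_all _ fun x => ?_)
    rw [Real.norm_eq_abs, abs_of_nonneg (hg₁0 x)]; exact hg₁le1 x
  have hg₂int : Integrable g₂ μ₀ := by
    refine Integrable.mono' (integrable_const 1) hg₂sm (ae_of_all _ fun x => ?_)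
    rw [Real.norm_eq_abs, abs_of_nonneg (hg₂0 x)]; exact hg₂le1 x
  have hZ₁le1 : Z₁ ≤ 1 := by
    calc Z₁ ≤ ∫ _, (1:ℝ) ∂μ₀ := integral_mono hg₁int (integrable_const 1) hg₁le1
    _ = 1 := by simp
  have hZ₂le1 : Z₂ ≤ 1 := by
    calc Z₂ ≤ ∫ _, (1:ℝ) ∂μ₀ := integral_mono hg₂int (integrable_const 1) hg₂le1
    _ = 1 := by simp
  -- f² g_i integrable and moment bounds
  have hf2g₁ : Integrable (fun x => f x ^ 2 * g₁ x) μ₀ := by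
    refine (hf₁.mul_const Z₁).congr (ae_of_all _ fun x => ?_)
    field_simp
    rfl
  have hf2g₂ : Integrable (fun x => f x ^ 2 * g₂ x) μ₀ := by
    refine (hf₂.mul_const Z₂).congr (ae_of_all _ fun x => ?_)
    field_simp
    rfl
  have hmomg₁ : (∫ x, f x ^ 2 * g₁ x ∂μ₀) ≤ Z₁ * B ^ 2 := by
    have h : (∫ x, f x ^ 2 * (g₁ x / Z₁) ∂μ₀) = (∫ x, f x ^ 2 * g₁ x ∂μ₀) / Z₁ := by
      rw [← integral_div]
      exact integral_congr_ae (ae_of_all _ fun x => (mul_div_assoc _ _ _).symm)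
    rw [h, div_le_iff₀ hZ₁pos] at hmom₁
    linarith [hmom₁]
  have hmomg₂ : (∫ x, f x ^ 2 * g₂ x ∂μ₀) ≤ Z₂ * B ^ 2 := by
    have h : (∫ x, f x ^ 2 * (g₂ x / Z₂) ∂μ₀) = (∫ x, f x ^ 2 * g₂ x ∂μ₀) / Z₂ := by
      rw [← integral_div]
      exact integral_congr_ae (ae_of_all _ fun x => (mul_div_assoc _ _ _).symm)
    rw [h, div_le_iff₀ hZ₂pos] at hmom₂
    linarith [hmom₂]
  have hmomg₁' : (∫ x, f x ^ 2 * g₁ x ∂μ₀) ≤ B ^ 2 :=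
    hmomg₁.trans (by nlinarith)
  have hmomg₂' : (∫ x, f x ^ 2 * g₂ x ∂μ₀) ≤ B ^ 2 :=
    hmomg₂.trans (by nlinarith)
  -- f g_i integrable
  have hfg₁int : Integrable (fun x => f x * g₁ x) μ₀ := by
    refine Integrable.mono' ((hf2g₁.add hg₁int).div_const 2)
      (hfm.aestronglyMeasurable.mul hg₁sm) (ae_of_all _ fun x => ?_)
    simp only [Pi.add_apply]
    rw [Real.norm_eq_abs, abs_mul, abs_of_nonneg (hg₁0 x)]
    nlinarith [sq_nonneg (|f x| - 1), hg₁0 x, hg₁le1 x, sq_abs (f x), abs_nonneg (f x)]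
  have hfg₂int : Integrable (fun x => f x * g₂ x) μ₀ := by
    refine Integrable.mono' ((hf2g₂.add hg₂int).div_const 2)
      (hfm.aestronglyMeasurable.mul hg₂sm) (ae_of_all _ fun x => ?_)
    simp only [Pi.add_apply]
    rw [Real.norm_eq_abs, abs_mul, abs_of_nonneg (hg₂0 x)]
    nlinarith [sq_nonneg (|f x| - 1), hg₂0 x, hg₂le1 x, sq_abs (f x), abs_nonneg (f x)]
  -- rewrite the posterior means
  have hP₁ : (∫ x, f x * (g₁ x / Z₁) ∂μ₀) = (∫ x, f x * g₁ x ∂μ₀) / Z₁ := by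
    rw [← integral_div]
    exact integral_congr_ae (ae_of_all _ fun x => (mul_div_assoc _ _ _).symm)
  have hP₂ : (∫ x, f x * (g₂ x / Z₂) ∂μ₀) = (∫ x, f x * g₂ x ∂μ₀) / Z₂ := by
    rw [← integral_div]
    exact integral_congr_ae (ae_of_all _ fun x => (mul_div_assoc _ _ _).symm)
  set I₁ : ℝ := ∫ x, f x * g₁ x ∂μ₀ with hI₁def
  set I₂ : ℝ := ∫ x, f x * g₂ x ∂μ₀ with hI₂def
  -- half-exponentials
  set h₁ : Ω → ℝ := fun x => Real.exp (-Φ₁ x / 2) with hh₁def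
  set h₂ : Ω → ℝ := fun x => Real.exp (-Φ₂ x / 2) with hh₂def
  have hh₁sq : ∀ x, h₁ x ^ 2 = g₁ x := fun x => by
    rw [hh₁def, hg₁def, sq, ← Real.exp_add]; ring_nf
  have hh₂sq : ∀ x, h₂ x ^ 2 = g₂ x := fun x => by
    rw [hh₂def, hg₂def, sq, ← Real.exp_add]; ring_nf
  have hh₁sm : AEStronglyMeasurable h₁ μ₀ :=
    ((hΦ₁m.neg.div_const 2).exp).aestronglyMeasurable
  have hh₂sm : AEStronglyMeasurable h₂ μ₀ :=
    ((hΦ₂m.neg.div_const 2).exp).aestronglyMeasurable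
  have hΔm : Measurable (fun x => Φ₁ x - Φ₂ x) := hΦ₁m.sub hΦ₂m
  -- set up Cauchy–Schwarz data: u_i = |f| h_i,  v = |Δ|
  have hu₁0 : ∀ x, 0 ≤ |f x| * h₁ x := fun x =>
    mul_nonneg (abs_nonneg _) (Real.exp_pos _).le
  have hu₂0 : ∀ x, 0 ≤ |f x| * h₂ x := fun x =>
    mul_nonneg (abs_nonneg _) (Real.exp_pos _).le
  have hu₁sm : AEStronglyMeasurable (fun x => |f x| * h₁ x) μ₀ :=
    (hfm.abs.aestronglyMeasurable).mul hh₁sm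
  have hu₂sm : AEStronglyMeasurable (fun x => |f x| * h₂ x) μ₀ :=
    (hfm.abs.aestronglyMeasurable).mul hh₂sm
  have hu₁2int : Integrable (fun x => (|f x| * h₁ x) ^ 2) μ₀ := by
    refine hf2g₁.congr (ae_of_all _ fun x => ?_)
    show f x ^ 2 * g₁ x = (|f x| * h₁ x) ^ 2
    rw [mul_pow, sq_abs, hh₁sq x]
  have hu₂2int : Integrable (fun x => (|f x| * h₂ x) ^ 2) μ₀ := by
    refine hf2g₂.congr (ae_of_all _ fun x => ?_)
    show f x ^ 2 * g₂ x = (|f x| * h₂ x) ^ 2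
    rw [mul_pow, sq_abs, hh₂sq x]
  have hv0 : ∀ x, 0 ≤ |Φ₁ x - Φ₂ x| := fun x => abs_nonneg _
  have hvsm : AEStronglyMeasurable (fun x => |Φ₁ x - Φ₂ x|) μ₀ :=
    hΔm.abs.aestronglyMeasurable
  have hv2int : Integrable (fun x => |Φ₁ x - Φ₂ x| ^ 2) μ₀ := by
    refine hsq.congr (ae_of_all _ fun x => (sq_abs _).symm)
  have hv2eq : (∫ x, |Φ₁ x - Φ₂ x| ^ 2 ∂μ₀) = ∫ x, (Φ₁ x - Φ₂ x) ^ 2 ∂μ₀ :=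
    integral_congr_ae (ae_of_all _ fun x => sq_abs _)
  have hu₁sq : (∫ x, (|f x| * h₁ x) ^ 2 ∂μ₀) = ∫ x, f x ^ 2 * g₁ x ∂μ₀ :=
    integral_congr_ae (ae_of_all _ fun x => by
      show (|f x| * h₁ x) ^ 2 = f x ^ 2 * g₁ x
      rw [mul_pow, sq_abs, hh₁sq x])
  have hu₂sq : (∫ x, (|f x| * h₂ x) ^ 2 ∂μ₀) = ∫ x, f x ^ 2 * g₂ x ∂μ₀ :=
    integral_congr_ae (ae_of_all _ fun x => by
      show (|f x| * h₂ x) ^ 2 = f x ^ 2 * g₂ x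
      rw [mul_pow, sq_abs, hh₂sq x])
  have hsqB₁ : Real.sqrt (∫ x, f x ^ 2 * g₁ x ∂μ₀) ≤ B := by
    calc Real.sqrt (∫ x, f x ^ 2 * g₁ x ∂μ₀) ≤ Real.sqrt (B ^ 2) :=
          Real.sqrt_le_sqrt hmomg₁'
    _ = B := Real.sqrt_sq hB
  have hsqB₂ : Real.sqrt (∫ x, f x ^ 2 * g₂ x ∂μ₀) ≤ B := by
    calc Real.sqrt (∫ x, f x ^ 2 * g₂ x ∂μ₀) ≤ Real.sqrt (B ^ 2) :=
          Real.sqrt_le_sqrt hmomg₂'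
    _ = B := Real.sqrt_sq hB
  -- Cauchy–Schwarz bounds
  have hCS₁ : (∫ x, (|f x| * h₁ x) * |Φ₁ x - Φ₂ x| ∂μ₀) ≤ B * D := by
    have := cs_int hu₁0 hv0 hu₁sm hvsm hu₁2int hv2int
    rw [hu₁sq, hv2eq] at this
    refine this.trans ?_
    exact mul_le_mul_of_nonneg_right hsqB₁ hD0
  have hCS₂ : (∫ x, (|f x| * h₂ x) * |Φ₁ x - Φ₂ x| ∂μ₀) ≤ B * D := by
    have := cs_int hu₂0 hv0 hu₂sm hvsm hu₂2int hv2int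
    rw [hu₂sq, hv2eq] at this
    refine this.trans ?_
    exact mul_le_mul_of_nonneg_right hsqB₂ hD0
  have huv₁int : Integrable (fun x => (|f x| * h₁ x) * |Φ₁ x - Φ₂ x|) μ₀ :=
    int_mul' hu₁0 hv0 hu₁sm hvsm hu₁2int hv2int
  have huv₂int : Integrable (fun x => (|f x| * h₂ x) * |Φ₁ x - Φ₂ x|) μ₀ :=
    int_mul' hu₂0 hv0 hu₂sm hvsm hu₂2int hv2int
  -- E1 : |I₁ - I₂| ≤ B * D
  have hE1 : |I₁ - I₂| ≤ B * D := by
    have hdiff : I₁ - I₂ = ∫ x, f x * g₁ x - f x * g₂ x ∂μ₀ :=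
      (integral_sub hfg₁int hfg₂int).symm
    have hptw : ∀ x, |f x * g₁ x - f x * g₂ x| ≤
        (1/2) * ((|f x| * h₁ x) * |Φ₁ x - Φ₂ x|)
          + (1/2) * ((|f x| * h₂ x) * |Φ₁ x - Φ₂ x|) := by
      intro x
      have key : |g₁ x - g₂ x| ≤ (h₁ x + h₂ x) * (|Φ₁ x - Φ₂ x| / 2) := by
        have hfac : g₁ x - g₂ x = (h₁ x - h₂ x) * (h₁ x + h₂ x) := by
          rw [← hh₁sq x, ← hh₂sq x]; ring
        have hl : |h₁ x - h₂ x| ≤ |Φ₁ x - Φ₂ x| / 2 := by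
          have h := exp_lip (a := Φ₁ x / 2) (b := Φ₂ x / 2)
            (by linarith [hΦ₁ x]) (by linarith [hΦ₂ x])
          have e1 : h₁ x = Real.exp (-(Φ₁ x / 2)) := by
            show Real.exp (-Φ₁ x / 2) = _; rw [neg_div]
          have e2 : h₂ x = Real.exp (-(Φ₂ x / 2)) := by
            show Real.exp (-Φ₂ x / 2) = _; rw [neg_div]
          rw [e1, e2]
          refine h.trans (le_of_eq ?_)
          rw [show Φ₁ x / 2 - Φ₂ x / 2 = (Φ₁ x - Φ₂ x) / 2 by ring, abs_div, abs_two]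
        have hpos : 0 ≤ h₁ x + h₂ x := by positivity
        calc |g₁ x - g₂ x| = |h₁ x - h₂ x| * (h₁ x + h₂ x) := by
              rw [hfac, abs_mul, abs_of_nonneg hpos]
        _ ≤ (|Φ₁ x - Φ₂ x| / 2) * (h₁ x + h₂ x) :=
              mul_le_mul_of_nonneg_right hl hpos
        _ = (h₁ x + h₂ x) * (|Φ₁ x - Φ₂ x| / 2) := by ring
      have : |f x * g₁ x - f x * g₂ x| = |f x| * |g₁ x - g₂ x| := by
        rw [← abs_mul]; congr 1; ring
      rw [this]
      calc |f x| * |g₁ x - g₂ x| ≤ |f x| * ((h₁ x + h₂ x) * (|Φ₁ x - Φ₂ x| / 2)) :=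
            mul_le_mul_of_nonneg_left key (abs_nonneg _)
      _ = (1/2) * ((|f x| * h₁ x) * |Φ₁ x - Φ₂ x|)
            + (1/2) * ((|f x| * h₂ x) * |Φ₁ x - Φ₂ x|) := by ring
    have hbint : Integrable (fun x =>
        (1/2) * ((|f x| * h₁ x) * |Φ₁ x - Φ₂ x|)
          + (1/2) * ((|f x| * h₂ x) * |Φ₁ x - Φ₂ x|)) μ₀ :=
      (huv₁int.const_mul _).add (huv₂int.const_mul _)
    calc |I₁ - I₂| = |∫ x, f x * g₁ x - f x * g₂ x ∂μ₀| := by rw [hdiff]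
    _ ≤ ∫ x, |f x * g₁ x - f x * g₂ x| ∂μ₀ := abs_int_le μ₀ _
    _ ≤ ∫ x, ((1/2) * ((|f x| * h₁ x) * |Φ₁ x - Φ₂ x|)
          + (1/2) * ((|f x| * h₂ x) * |Φ₁ x - Φ₂ x|)) ∂μ₀ := by
        refine integral_mono_of_nonneg (ae_of_all _ fun x => abs_nonneg _) hbint
          (ae_of_all _ hptw)
    _ = (1/2) * (∫ x, (|f x| * h₁ x) * |Φ₁ x - Φ₂ x| ∂μ₀)
          + (1/2) * (∫ x, (|f x| * h₂ x) * |Φ₁ x - Φ₂ x| ∂μ₀) := by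
        rw [integral_add (huv₁int.const_mul _) (huv₂int.const_mul _),
          integral_const_mul, integral_const_mul]
    _ ≤ (1/2) * (B * D) + (1/2) * (B * D) := by
        linarith [hCS₁, hCS₂]
    _ = B * D := by ring
  -- E2 : |Z₁ - Z₂| ≤ D
  have habsΔint : Integrable (fun x => |Φ₁ x - Φ₂ x|) μ₀ := by
    refine Integrable.mono' ((hsq.add (integrable_const 1)).div_const 2)
      hΔm.abs.aestronglyMeasurable (ae_of_all _ fun x => ?_)
    simp only [Pi.add_apply]
    rw [Real.norm_eq_abs, abs_abs]
    linarith [sq_nonneg (|Φ₁ x - Φ₂ x| - 1), sq_abs (Φ₁ x - Φ₂ x)]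
  have hintabsΔ : (∫ x, |Φ₁ x - Φ₂ x| ∂μ₀) ≤ D := by
    have h := cs_int (μ := μ₀) (u := fun x => |Φ₁ x - Φ₂ x|) (v := fun _ => 1)
      hv0 (fun _ => zero_le_one) hvsm aestronglyMeasurable_const hv2int
      (by simpa using (integrable_const (1:ℝ)))
    simp only [mul_one, one_pow] at h
    rw [hv2eq] at h
    have h1 : (∫ _, (1:ℝ) ∂μ₀) = 1 := by simp
    rw [h1, Real.sqrt_one, mul_one] at h
    exact h
  have hE2 : |Z₁ - Z₂| ≤ D := by
    have hdiff : Z₁ - Z₂ = ∫ x, g₁ x - g₂ x ∂μ₀ := (integral_sub hg₁int hg₂int).symm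
    calc |Z₁ - Z₂| = |∫ x, g₁ x - g₂ x ∂μ₀| := by rw [hdiff]
    _ ≤ ∫ x, |g₁ x - g₂ x| ∂μ₀ := abs_int_le μ₀ _
    _ ≤ ∫ x, |Φ₁ x - Φ₂ x| ∂μ₀ := by
        refine integral_mono_of_nonneg (ae_of_all _ fun x => abs_nonneg _) habsΔint
          (ae_of_all _ fun x => exp_lip (hΦ₁ x) (hΦ₂ x))
    _ ≤ D := hintabsΔ
  -- E3 : |I₂| ≤ Z₂ * B
  have hE3 : |I₂| ≤ Z₂ * B := by
    have hh₂0 : ∀ x, 0 ≤ h₂ x := fun x => (Real.exp_pos _).le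
    have hh₂2int : Integrable (fun x => h₂ x ^ 2) μ₀ := by
      refine hg₂int.congr (ae_of_all _ fun x => (hh₂sq x).symm)
    have h := cs_int hu₂0 hh₂0 hu₂sm hh₂sm hu₂2int hh₂2int
    rw [hu₂sq] at h
    have hint2 : (∫ x, h₂ x ^ 2 ∂μ₀) = Z₂ :=
      integral_congr_ae (ae_of_all _ fun x => hh₂sq x)
    rw [hint2] at h
    have habs : |I₂| ≤ ∫ x, (|f x| * h₂ x) * h₂ x ∂μ₀ := by
      calc |I₂| ≤ ∫ x, |f x * g₂ x| ∂μ₀ := abs_int_le μ₀ _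
      _ = ∫ x, (|f x| * h₂ x) * h₂ x ∂μ₀ := by
          refine integral_congr_ae (ae_of_all _ fun x => ?_)
          show |f x * g₂ x| = (|f x| * h₂ x) * h₂ x
          rw [abs_mul, abs_of_nonneg (hg₂0 x), ← hh₂sq x]; ring
    refine habs.trans (h.trans ?_)
    calc Real.sqrt (∫ x, f x ^ 2 * g₂ x ∂μ₀) * Real.sqrt Z₂
        ≤ Real.sqrt (Z₂ * B ^ 2) * Real.sqrt Z₂ := by
          exact mul_le_mul_of_nonneg_right (Real.sqrt_le_sqrt hmomg₂) (Real.sqrt_nonneg _)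
    _ = Z₂ * B := by
        rw [Real.sqrt_mul hZ₂pos.le, Real.sqrt_sq hB]
        rw [mul_comm (Real.sqrt Z₂) B, mul_assoc, Real.mul_self_sqrt hZ₂pos.le]
        ring
  -- main bound with 1/z
  have hkey : |I₁ / Z₁ - I₂ / Z₂| ≤ 2 * B * D / z := by
    have hsplit : I₁ / Z₁ - I₂ / Z₂ = (I₁ - I₂) / Z₁ + (Z₂ - Z₁) * I₂ / (Z₁ * Z₂) := by
      field_simp
      ring
    rw [hsplit]
    have t1 : |(I₁ - I₂) / Z₁| ≤ B * D / z := by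
      rw [abs_div, abs_of_pos hZ₁pos]
      exact div_le_div₀ (by positivity) hE1 hz0 hZ₁
    have t2 : |(Z₂ - Z₁) * I₂ / (Z₁ * Z₂)| ≤ B * D / z := by
      rw [abs_div, abs_mul, abs_of_pos (mul_pos hZ₁pos hZ₂pos)]
      have hnum : |Z₂ - Z₁| * |I₂| ≤ D * (Z₂ * B) := by
        refine mul_le_mul ?_ hE3 (abs_nonneg _) hD0
        rw [abs_sub_comm]; exact hE2
      have hden : z * Z₂ ≤ Z₁ * Z₂ := by
        exact mul_le_mul_of_nonneg_right hZ₁ hZ₂pos.le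
      calc |Z₂ - Z₁| * |I₂| / (Z₁ * Z₂) ≤ D * (Z₂ * B) / (z * Z₂) :=
            div_le_div₀ (by positivity) hnum (by positivity) hden
      _ = B * D / z := by field_simp
    calc |(I₁ - I₂) / Z₁ + (Z₂ - Z₁) * I₂ / (Z₁ * Z₂)|
        ≤ |(I₁ - I₂) / Z₁| + |(Z₂ - Z₁) * I₂ / (Z₁ * Z₂)| := abs_add_le _ _
    _ ≤ B * D / z + B * D / z := add_le_add t1 t2
    _ = 2 * B * D / z := by ring
  -- pass to z^{-3/2}
  have hzpow : z⁻¹ ≤ z ^ (-(3:ℝ) / 2) := by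
    have := Real.rpow_le_rpow_of_exponent_ge hz0 hz1 (by norm_num : -(3:ℝ)/2 ≤ -1)
    rwa [Real.rpow_neg_one] at this
  have hmain : |I₁ / Z₁ - I₂ / Z₂| ≤ 2 * B * z ^ (-(3:ℝ) / 2) * D := by
    refine hkey.trans ?_
    rw [div_eq_mul_inv]
    calc 2 * B * D * z⁻¹ ≤ 2 * B * D * z ^ (-(3:ℝ) / 2) :=
          mul_le_mul_of_nonneg_left hzpow (by positivity)
    _ = 2 * B * z ^ (-(3:ℝ) / 2) * D := by ring
  rw [hP₁, hP₂]
  refine ⟨hmain, fun C hC M hM s hs hDC => hmain.trans ?_⟩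
  exact mul_le_mul_of_nonneg_left hDC (by positivity)
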